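/- Let Q = {(0,0), (2,1), (3/4,1), (5/4,0)} ⊂ ℝ². Then the minimum of f_OBB(u, Q) over all unit vectors u equals 2 (attained at u = (1,0) and at u = (cos(2·arctan(1/2)), sin(2·arctan(1/2)))), and for u₀ = (cos(arctan(1/2)), sin(arctan(1/2))) one has f_OBB(u₀, Q) = 5/2. -/

import Mathlib

open Real
open scoped RealInnerProductSpace

noncomputable section

/-- The point of `ℝ²` with coordinates `a`, `b`. -/
def pt (a b : ℝ) : EuclideanSpace ℝ (Fin 2) :=
  (WithLp.equiv 2 (Fin 2 → ℝ)).symm ![a, b]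

/-- `v` rotated counterclockwise by `π/2`. -/
def perp (v : EuclideanSpace ℝ (Fin 2)) : EuclideanSpace ℝ (Fin 2) :=
  pt (-(v 1)) (v 0)

/-- The extent of a point set `P` along a vector `v`: `max_{p,q ∈ P} ⟨p − q, v⟩`. -/
def wext (v : EuclideanSpace ℝ (Fin 2)) (P : Set (EuclideanSpace ℝ (Fin 2))) : ℝ :=
  sSup {x : ℝ | ∃ p ∈ P, ∃ q ∈ P, x = ⟪p - q, v⟫}

/-- The oriented-bounding-box cost `f_OBB(u, P) = w_u(P) · w_{u⊥}(P)`. -/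
def fOBB (u : EuclideanSpace ℝ (Fin 2)) (P : Set (EuclideanSpace ℝ (Fin 2))) : ℝ :=
  wext u P * wext (perp u) P

@[simp] lemma pt_zero (a b : ℝ) : pt a b 0 = a := rfl
@[simp] lemma pt_one (a b : ℝ) : pt a b 1 = b := rfl

lemma pt_eta (u : EuclideanSpace ℝ (Fin 2)) : pt (u 0) (u 1) = u := by
  ext i; fin_cases i <;> rfl

lemma pt_neg (a b : ℝ) : -pt a b = pt (-a) (-b) := by
  ext i; fin_cases i <;> simp

lemma inner_pt (x y a b : ℝ) : ⟪pt x y, pt a b⟫ = x*a + y*b := by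
  simp [pt, PiLp.inner_apply, Fin.sum_univ_two]
  ring

lemma perp_pt (a b : ℝ) : perp (pt a b) = pt (-b) a := rfl

lemma wext_neg (u : EuclideanSpace ℝ (Fin 2)) (P : Set (EuclideanSpace ℝ (Fin 2))) :
    wext (-u) P = wext u P := by
  unfold wext
  congr 1
  ext x
  constructor
  · rintro ⟨p, hp, q, hq, rfl⟩
    exact ⟨q, hq, p, hp, by rw [inner_neg_right, ← inner_neg_left, neg_sub]⟩
  · rintro ⟨p, hp, q, hq, rfl⟩
    exact ⟨q, hq, p, hp, by rw [inner_neg_right, ← inner_neg_left, neg_sub]⟩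

lemma perp_perp (u : EuclideanSpace ℝ (Fin 2)) : perp (perp u) = -u := by
  rw [show perp u = pt (-(u 1)) (u 0) from rfl, perp_pt, ← pt_neg, pt_eta]

lemma fOBB_perp (u : EuclideanSpace ℝ (Fin 2)) (P : Set (EuclideanSpace ℝ (Fin 2))) :
    fOBB (perp u) P = fOBB u P := by
  unfold fOBB
  rw [perp_perp, wext_neg, mul_comm]

lemma perp_neg (u : EuclideanSpace ℝ (Fin 2)) : perp (-u) = -perp u := by
  ext i; fin_cases i <;> simp [perp]

lemma fOBB_neg (u : EuclideanSpace ℝ (Fin 2)) (P : Set (EuclideanSpace ℝ (Fin 2))) :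
    fOBB (-u) P = fOBB u P := by
  unfold fOBB
  rw [perp_neg, wext_neg, wext_neg]

/-- Compute the extent of `Q` along `pt a b` given explicit max `M` and min `m`
of the projections `0, 2a+b, (3/4)a+b, (5/4)a`. -/
lemma wext_Q (a b M m : ℝ)
    (hM : M = 0 ∨ M = 2*a+b ∨ M = 3/4*a+b ∨ M = 5/4*a)
    (hm : m = 0 ∨ m = 2*a+b ∨ m = 3/4*a+b ∨ m = 5/4*a)
    (h1 : 0 ≤ M) (h2 : 2*a+b ≤ M) (h3 : 3/4*a+b ≤ M) (h4 : 5/4*a ≤ M)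
    (g1 : m ≤ 0) (g2 : m ≤ 2*a+b) (g3 : m ≤ 3/4*a+b) (g4 : m ≤ 5/4*a) :
    wext (pt a b) {pt 0 0, pt 2 1, pt (3/4) 1, pt (5/4) 0} = M - m := by
  have hQ : ∀ p ∈ ({pt 0 0, pt 2 1, pt (3/4) 1, pt (5/4) 0} :
      Set (EuclideanSpace ℝ (Fin 2))),
      m ≤ ⟪p, pt a b⟫ ∧ ⟪p, pt a b⟫ ≤ M := by
    rintro p (rfl | rfl | rfl | rfl) <;>
      rw [inner_pt] <;> constructor <;> linarith
  have hMex : ∃ p ∈ ({pt 0 0, pt 2 1, pt (3/4) 1, pt (5/4) 0} :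
      Set (EuclideanSpace ℝ (Fin 2))), ⟪p, pt a b⟫ = M := by
    rcases hM with rfl | rfl | rfl | rfl
    · exact ⟨pt 0 0, by simp, by rw [inner_pt]; ring⟩
    · exact ⟨pt 2 1, by simp, by rw [inner_pt]; ring⟩
    · exact ⟨pt (3/4) 1, by simp, by rw [inner_pt]; ring⟩
    · exact ⟨pt (5/4) 0, by simp, by rw [inner_pt]; ring⟩
  have hmex : ∃ q ∈ ({pt 0 0, pt 2 1, pt (3/4) 1, pt (5/4) 0} :
      Set (EuclideanSpace ℝ (Fin 2))), ⟪q, pt a b⟫ = m := by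
    rcases hm with rfl | rfl | rfl | rfl
    · exact ⟨pt 0 0, by simp, by rw [inner_pt]; ring⟩
    · exact ⟨pt 2 1, by simp, by rw [inner_pt]; ring⟩
    · exact ⟨pt (3/4) 1, by simp, by rw [inner_pt]; ring⟩
    · exact ⟨pt (5/4) 0, by simp, by rw [inner_pt]; ring⟩
  apply IsGreatest.csSup_eq
  constructor
  · obtain ⟨p, hp, hpv⟩ := hMex
    obtain ⟨q, hq, hqv⟩ := hmex
    exact ⟨p, hp, q, hq, by rw [inner_sub_left, hpv, hqv]⟩
  · rintro x ⟨p, hp, q, hq, rfl⟩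
    rw [inner_sub_left]
    have := hQ p hp
    have := hQ q hq
    linarith [this.1, this.2, (hQ p hp).1, (hQ p hp).2]

lemma fOBB_Q (a b : ℝ) :
    fOBB (pt a b) {pt 0 0, pt 2 1, pt (3/4) 1, pt (5/4) 0} =
    wext (pt a b) {pt 0 0, pt 2 1, pt (3/4) 1, pt (5/4) 0} *
    wext (pt (-b) a) {pt 0 0, pt 2 1, pt (3/4) 1, pt (5/4) 0} := by
  rw [fOBB, perp_pt]

lemma key (a b : ℝ) (ha : 0 ≤ a) (hb : 0 ≤ b) (hab : a^2 + b^2 = 1) :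
    2 ≤ fOBB (pt a b) {pt 0 0, pt 2 1, pt (3/4) 1, pt (5/4) 0} := by
  rw [fOBB_Q]
  have hw1 : wext (pt a b) {pt 0 0, pt 2 1, pt (3/4) 1, pt (5/4) 0} = (2*a+b) - 0 :=
    wext_Q a b (2*a+b) 0 (by tauto) (by tauto)
      (by linarith) le_rfl (by linarith) (by linarith)
      le_rfl (by linarith) (by linarith) (by linarith)
  rw [hw1]
  rcases le_or_gt (3*b) (4*a) with h | h
  · have hw2 : wext (pt (-b) a) {pt 0 0, pt 2 1, pt (3/4) 1, pt (5/4) 0}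
        = (3/4*(-b)+a) - (5/4*(-b)) :=
      wext_Q (-b) a (3/4*(-b)+a) (5/4*(-b)) (by tauto) (by tauto)
        (by linarith) (by linarith) le_rfl (by linarith)
        (by linarith) (by linarith) (by linarith) le_rfl
    rw [hw2]
    nlinarith [sq_nonneg (a - b), sq_nonneg b]
  · have hw2 : wext (pt (-b) a) {pt 0 0, pt 2 1, pt (3/4) 1, pt (5/4) 0}
        = 0 - (2*(-b)+a) :=
      wext_Q (-b) a 0 (2*(-b)+a) (by tauto) (by tauto)
        le_rfl (by linarith) (by linarith) (by linarith)
        (by linarith) le_rfl (by linarith) (by linarith)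
    rw [hw2]
    nlinarith [sq_nonneg a]

/-- For the static point set `Q = {(0,0), (2,1), (3/4,1), (5/4,0)}`, the minimum
oriented-bounding-box area over all unit orientations is `2`, attained at
orientation `(1,0)` and at orientation `2·arctan(1/2)`, while the intermediate
orientation `arctan(1/2)` has cost `5/2`. -/
theorem stmt_6 :
    (∀ u : EuclideanSpace ℝ (Fin 2), ‖u‖ = 1 →
        2 ≤ fOBB u {pt 0 0, pt 2 1, pt (3/4) 1, pt (5/4) 0}) ∧
    fOBB (pt 1 0) {pt 0 0, pt 2 1, pt (3/4) 1, pt (5/4) 0} = 2 ∧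
    fOBB (pt (Real.cos (2 * Real.arctan (1/2))) (Real.sin (2 * Real.arctan (1/2))))
        {pt 0 0, pt 2 1, pt (3/4) 1, pt (5/4) 0} = 2 ∧
    fOBB (pt (Real.cos (Real.arctan (1/2))) (Real.sin (Real.arctan (1/2))))
        {pt 0 0, pt 2 1, pt (3/4) 1, pt (5/4) 0} = 5/2 := by
  set s : ℝ := Real.sqrt (1 + (1/2:ℝ)^2) with hs_def
  have hs2 : s^2 = 5/4 := by
    rw [hs_def, Real.sq_sqrt (by norm_num : (0:ℝ) ≤ 1 + (1/2:ℝ)^2)]; norm_num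
  have hs0 : 0 < s := Real.sqrt_pos.mpr (by norm_num)
  have hinv : 0 < 1/s := by positivity
  refine ⟨?_, ?_, ?_, ?_⟩
  · intro u hu
    have hab : u 0 ^ 2 + u 1 ^ 2 = 1 := by
      rw [EuclideanSpace.norm_eq, Fin.sum_univ_two, Real.norm_eq_abs,
        Real.norm_eq_abs, sq_abs, sq_abs, Real.sqrt_eq_one] at hu
      exact hu
    rw [← pt_eta u]
    set a := u 0
    set b := u 1
    rcases le_or_gt 0 a with ha | ha <;> rcases le_or_gt 0 b with hb | hb
    · exact key a b ha hb hab
    · have h : perp (pt a b) = pt (-b) a := perp_pt a b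
      rw [← fOBB_perp, h]
      exact key (-b) a (by linarith) ha (by nlinarith)
    · have h : pt a b = perp (pt b (-a)) := by rw [perp_pt, neg_neg]
      rw [h, fOBB_perp]
      exact key b (-a) hb (by linarith) (by nlinarith)
    · rw [← fOBB_neg, pt_neg]
      exact key (-a) (-b) (by linarith) (by linarith) (by nlinarith)
  · rw [fOBB_Q,
      wext_Q 1 0 2 0 (by norm_num) (by norm_num) (by norm_num) (by norm_num)
        (by norm_num) (by norm_num) (by norm_num) (by norm_num) (by norm_num)
        (by norm_num),
      wext_Q (-0) 1 1 0 (by norm_num) (by norm_num) (by norm_num) (by norm_num)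
        (by norm_num) (by norm_num) (by norm_num) (by norm_num) (by norm_num)
        (by norm_num)]
    norm_num
  · have hc : Real.cos (2 * Real.arctan (1/2)) = 3/5 := by
      rw [Real.cos_two_mul, Real.cos_arctan, ← hs_def]
      field_simp
      nlinarith [hs2]
    have hsn : Real.sin (2 * Real.arctan (1/2)) = 4/5 := by
      rw [Real.sin_two_mul, Real.sin_arctan, Real.cos_arctan, ← hs_def]
      field_simp
      nlinarith [hs2]
    rw [hc, hsn, fOBB_Q,
      wext_Q (3/5) (4/5) 2 0 (by norm_num) (by norm_num) (by norm_num) (by norm_num)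
        (by norm_num) (by norm_num) (by norm_num) (by norm_num) (by norm_num)
        (by norm_num),
      wext_Q (-(4/5)) (3/5) 0 (-1) (by norm_num) (by norm_num) (by norm_num)
        (by norm_num) (by norm_num) (by norm_num) (by norm_num) (by norm_num)
        (by norm_num) (by norm_num)]
    norm_num
  · set c : ℝ := 1/s with hc_def
    have hc0 : 0 < c := by rw [hc_def]; positivity
    have hc2 : c^2 = 4/5 := by
      rw [hc_def, div_pow, hs2]; norm_num
    have hc : Real.cos (Real.arctan (1/2)) = c := by
      rw [Real.cos_arctan, ← hs_def, hc_def]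
    have hsn : Real.sin (Real.arctan (1/2)) = c/2 := by
      rw [Real.sin_arctan, ← hs_def, hc_def]; ring
    rw [hc, hsn, fOBB_Q,
      wext_Q c (c/2) (2*c+c/2) 0 (by tauto) (by tauto)
        (by linarith) le_rfl (by linarith) (by linarith)
        le_rfl (by linarith) (by linarith) (by linarith),
      wext_Q (-(c/2)) c (3/4*(-(c/2))+c) (5/4*(-(c/2)))
        (by tauto) (by tauto)
        (by linarith) (by linarith) le_rfl (by linarith)
        (by linarith) (by linarith) (by linarith) le_rfl]
    linear_combination (25/8) * hc2

end
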